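/- In the untyped λ-calculus, the leftmost-outermost (normal order) β-reduction strategy is normalizing: if a term M has a β-normal form, then the leftmost-outermost reduction sequence starting from M terminates in that normal form. -/

import Mathlib

/-- Untyped λ-terms with de Bruijn indices (so α-equivalence is equality). -/
inductive Lam : Type
  | var : ℕ → Lam
  | app : Lam → Lam → Lam
  | lam : Lam → Lam
deriving DecidableEq, Repr

namespace Lam

/-- Lift (shift) free variables ≥ `d` by one. -/
def lift (d : ℕ) : Lam → Lam
  | var n => if n < d then var n else var (n + 1)
  | app s t => app (lift d s) (lift d t)
  | lam t => lam (lift (d + 1) t)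

/-- Substitute `u` for the variable with index `d`. -/
def subst (d : ℕ) (u : Lam) : Lam → Lam
  | var n => if n = d then u else if n < d then var n else var (n - 1)
  | app s t => app (subst d u s) (subst d u t)
  | lam t => lam (subst (d + 1) (lift 0 u) t)

/-- One-step β-reduction. -/
inductive Beta : Lam → Lam → Prop
  | beta (t u : Lam) : Beta (app (lam t) u) (subst 0 u t)
  | appL {s s' : Lam} (t : Lam) : Beta s s' → Beta (app s t) (app s' t)
  | appR (s : Lam) {t t' : Lam} : Beta t t' → Beta (app s t) (app s t')
  | abs {t t' : Lam} : Beta t t' → Beta (lam t) (lam t')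

/-- One-step η-reduction. -/
inductive Eta : Lam → Lam → Prop
  | eta (t : Lam) : Eta (lam (app (lift 0 t) (var 0))) t
  | appL {s s' : Lam} (t : Lam) : Eta s s' → Eta (app s t) (app s' t)
  | appR (s : Lam) {t t' : Lam} : Eta t t' → Eta (app s t) (app s t')
  | abs {t t' : Lam} : Eta t t' → Eta (lam t) (lam t')

/-- One-step βη-reduction. -/
def BetaEta (s t : Lam) : Prop := Beta s t ∨ Eta s t

/-- Multi-step β-reduction. -/
def BetaStar : Lam → Lam → Prop := Relation.ReflTransGen Beta

/-- Multi-step βη-reduction. -/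
def BetaEtaStar : Lam → Lam → Prop := Relation.ReflTransGen BetaEta

/-- β-conversion. -/
def BetaConv : Lam → Lam → Prop := Relation.EqvGen Beta

/-- βη-conversion. -/
def BetaEtaConv : Lam → Lam → Prop := Relation.EqvGen BetaEta

/-- All free variables have index < `d`. -/
def ClosedUnder : ℕ → Lam → Prop
  | d, var n => n < d
  | d, app s t => ClosedUnder d s ∧ ClosedUnder d t
  | d, lam t => ClosedUnder (d + 1) t

/-- A term is closed if it has no free variables. -/
def Closed (t : Lam) : Prop := ClosedUnder 0 t

/-- β-normal form. -/
def BetaNF (t : Lam) : Prop := ∀ u, ¬ Beta t u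

/-- βη-normal form. -/
def BetaEtaNF (t : Lam) : Prop := ∀ u, ¬ BetaEta t u

end Lam

open Lam

/-- One step of the leftmost-outermost (normal order) β-reduction strategy. -/
inductive Lmo : Lam → Lam → Prop
  | head (t u : Lam) : Lmo (Lam.app (Lam.lam t) u) (Lam.subst 0 u t)
  | appL {s s' : Lam} (t : Lam) : (∀ t', s ≠ Lam.lam t') → Lmo s s' →
      Lmo (Lam.app s t) (Lam.app s' t)
  | appR (s : Lam) {t t' : Lam} : (∀ t', s ≠ Lam.lam t') → (∀ s', ¬ Beta s s') →
      Lmo t t' → Lmo (Lam.app s t) (Lam.app s t')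
  | abs {t t' : Lam} : Lmo t t' → Lmo (Lam.lam t) (Lam.lam t')


namespace Lam

theorem lift_lift (t : Lam) : ∀ i j, i ≤ j →
    lift i (lift j t) = lift (j + 1) (lift i t) := by
  induction t with
  | var n =>
    intro i j h
    simp only [lift]
    split_ifs <;> (try simp only [lift, subst]) <;> (try split_ifs) <;>
      first
        | rfl
        | omega
        | (simp only [Lam.var.injEq]; omega)
        | (exfalso; omega)
  | app s t ihs iht =>
    intro i j h; simp only [lift, ihs i j h, iht i j h]
  | lam t ih =>
    intro i j h; simp only [lift, ih (i+1) (j+1) (by omega)]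

theorem lift_subst_lt (t : Lam) : ∀ i j (u : Lam), i ≤ j →
    lift i (subst j u t) = subst (j + 1) (lift i u) (lift i t) := by
  induction t with
  | var n =>
    intro i j u h
    simp only [lift, subst]
    split_ifs <;> (try simp only [lift, subst]) <;> (try split_ifs) <;>
      first
        | rfl
        | omega
        | (simp only [Lam.var.injEq]; omega)
        | (exfalso; omega)
  | app s t ihs iht =>
    intro i j u h; simp only [lift, subst, ihs i j u h, iht i j u h]
  | lam t ih =>
    intro i j u h
    simp only [lift, subst, ih (i+1) (j+1) (lift 0 u) (by omega),
      lift_lift u 0 i (by omega)]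

theorem lift_subst_ge (t : Lam) : ∀ i j (u : Lam), j ≤ i →
    lift i (subst j u t) = subst j (lift i u) (lift (i + 1) t) := by
  induction t with
  | var n =>
    intro i j u h
    simp only [lift, subst]
    split_ifs <;> (try simp only [lift, subst]) <;> (try split_ifs) <;>
      first
        | rfl
        | omega
        | (simp only [Lam.var.injEq]; omega)
        | (exfalso; omega)
  | app s t ihs iht =>
    intro i j u h; simp only [lift, subst, ihs i j u h, iht i j u h]
  | lam t ih =>
    intro i j u h
    simp only [lift, subst, ih (i+1) (j+1) (lift 0 u) (by omega),
      lift_lift u 0 i (by omega)]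

theorem subst_lift (t : Lam) : ∀ d (u : Lam), subst d u (lift d t) = t := by
  induction t with
  | var n =>
    intro d u
    simp only [lift, subst]
    split_ifs <;> (try simp only [lift, subst]) <;> (try split_ifs) <;>
      first
        | rfl
        | omega
        | (simp only [Lam.var.injEq]; omega)
        | (exfalso; omega)
  | app s t ihs iht => intro d u; simp only [lift, subst, ihs, iht]
  | lam t ih => intro d u; simp only [lift, subst, ih]

theorem subst_subst (t : Lam) : ∀ i j (u v : Lam), i ≤ j →
    subst j u (subst i v t) =
      subst i (subst j u v) (subst (j + 1) (lift i u) t) := by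
  induction t with
  | var n =>
    intro i j u v h
    simp only [subst]
    split_ifs <;> (try simp only [subst, lift]) <;> (try split_ifs) <;>
      first
        | rfl
        | omega
        | (simp only [Lam.var.injEq]; omega)
        | (exfalso; omega)
        | (rw [subst_lift])
  | app s t ihs iht =>
    intro i j u v h; simp only [subst, ihs i j u v h, iht i j u v h]
  | lam t ih =>
    intro i j u v h
    simp only [subst, ih (i+1) (j+1) (lift 0 u) (lift 0 v) (by omega),
      lift_subst_lt v 0 j u (by omega), lift_lift u 0 i (by omega)]


end Lam

namespace LmoProof

open Lam

/-- Weak head reduction, one step. -/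
inductive Hap1 : Lam → Lam → Prop
  | head (t u : Lam) : Hap1 (app (lam t) u) (subst 0 u t)
  | appL {s s' : Lam} (t : Lam) : Hap1 s s' → Hap1 (app s t) (app s' t)

/-- Weak head reduction, many steps. -/
def Hap : Lam → Lam → Prop := Relation.ReflTransGen Hap1

/-- Kashima's standard reduction relation. -/
inductive St : Lam → Lam → Prop
  | var {M : Lam} {n : ℕ} : Hap M (var n) → St M (var n)
  | lam {M A A' : Lam} : Hap M (lam A) → St A A' → St M (lam A')
  | app {M A B A' B' : Lam} : Hap M (app A B) → St A A' → St B B' →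
      St M (app A' B')

theorem hap_st {M N P : Lam} (h : Hap M N) (h2 : St N P) : St M P := by
  cases h2 with
  | var h' => exact St.var (h.trans h')
  | lam h' hA => exact St.lam (h.trans h') hA
  | app h' hA hB => exact St.app (h.trans h') hA hB

theorem st_refl (M : Lam) : St M M := by
  induction M with
  | var n => exact St.var .refl
  | app s t ihs iht => exact St.app .refl ihs iht
  | lam t ih => exact St.lam .refl ih

theorem hap1_subst {M M' : Lam} (h : Hap1 M M') (d : ℕ) (u : Lam) :
    Hap1 (subst d u M) (subst d u M') := by
  induction h with
  | head t v =>
    simp only [Lam.subst]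
    rw [Lam.subst_subst t 0 d u v (Nat.zero_le d)]
    exact Hap1.head _ _
  | appL t _ ih => exact Hap1.appL _ ih

theorem hap_subst {M M' : Lam} (h : Hap M M') (d : ℕ) (u : Lam) :
    Hap (subst d u M) (subst d u M') :=
  Relation.ReflTransGen.lift (subst d u) (fun _ _ hab => hap1_subst hab d u) _ _ h

theorem hap1_lift {M M' : Lam} (h : Hap1 M M') (d : ℕ) :
    Hap1 (lift d M) (lift d M') := by
  induction h with
  | head t v =>
    simp only [Lam.lift]
    rw [Lam.lift_subst_ge t d 0 v (Nat.zero_le d)]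
    exact Hap1.head _ _
  | appL t _ ih => exact Hap1.appL _ ih

theorem hap_lift {M M' : Lam} (h : Hap M M') (d : ℕ) :
    Hap (lift d M) (lift d M') :=
  Relation.ReflTransGen.lift (lift d) (fun _ _ hab => hap1_lift hab d) _ _ h

theorem st_lift {M M' : Lam} (h : St M M') : ∀ d, St (lift d M) (lift d M') := by
  induction h with
  | var h => intro d; exact hap_st (hap_lift h d) (by simp only [Lam.lift]; split_ifs <;> exact st_refl _)
  | @lam P A A' h _ ih =>
    intro d
    have h1 : Hap (lift d P) (Lam.lam (lift (d+1) A)) := by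
      simpa only [Lam.lift] using hap_lift h d
    exact St.lam h1 (ih (d+1))
  | @app P A B A' B' h _ _ ihA ihB =>
    intro d
    have h1 : Hap (lift d P) (Lam.app (lift d A) (lift d B)) := by
      simpa only [Lam.lift] using hap_lift h d
    exact St.app h1 (ihA d) (ihB d)

theorem st_subst {M M' : Lam} (hM : St M M') :
    ∀ (d : ℕ) (N N' : Lam), St N N' → St (subst d N M) (subst d N' M') := by
  induction hM with
  | @var P n h =>
    intro d N N' hN
    have h1 := hap_subst h d N
    by_cases hnd : n = d
    · subst hnd
      simp only [Lam.subst, if_pos rfl] at h1 ⊢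
      exact hap_st h1 hN
    · have e : subst d N (var n) = subst d N' (var n) := by
        simp only [Lam.subst, if_neg hnd]
      rw [e] at h1
      exact hap_st h1 (st_refl _)
  | @lam P A A' h _ ih =>
    intro d N N' hN
    have h1 : Hap (subst d N P) (Lam.lam (subst (d+1) (lift 0 N) A)) := by
      simpa only [Lam.subst] using hap_subst h d N
    exact St.lam h1 (ih (d+1) _ _ (st_lift hN 0))
  | @app P A B A' B' h _ _ ihA ihB =>
    intro d N N' hN
    have h1 : Hap (subst d N P) (Lam.app (subst d N A) (subst d N B)) := by
      simpa only [Lam.subst] using hap_subst h d N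
    exact St.app h1 (ihA d _ _ hN) (ihB d _ _ hN)

theorem hap_appL {A A' : Lam} (h : Hap A A') (B : Lam) :
    Hap (app A B) (app A' B) :=
  Relation.ReflTransGen.lift (fun x => app x B) (fun _ _ hab => Hap1.appL B hab) _ _ h

theorem st_beta {M N N' : Lam} (h : St M N) (hb : Beta N N') : St M N' := by
  induction h generalizing N' with
  | var h => cases hb
  | lam h _ ih =>
    cases hb with
    | abs hb' => exact St.lam h (ih hb')
  | app h hA hB ihA ihB =>
    cases hb with
    | beta t u =>
      cases hA with
      | lam h2 hA2 =>
        have hh : Hap _ (app (Lam.lam _) _) := h.trans (hap_appL h2 _)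
        have hh2 : Hap _ (subst 0 _ _) := hh.tail (Hap1.head _ _)
        exact hap_st hh2 (st_subst hA2 0 _ _ hB)
    | appL t hb' => exact St.app h (ihA hb') hB
    | appR s hb' => exact St.app h hA (ihB hb')

theorem betastar_st {M N : Lam} (h : BetaStar M N) : St M N := by
  induction h with
  | refl => exact st_refl M
  | tail _ hb ih => exact st_beta ih hb

theorem lmo_lam {t u : Lam} (h : Lmo (lam t) u) : ∃ t', u = lam t' := by
  cases h with
  | abs h' => exact ⟨_, rfl⟩

theorem lmoStar_lam {t u : Lam} (h : Relation.ReflTransGen Lmo (lam t) u) :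
    ∃ t', u = lam t' := by
  induction h with
  | refl => exact ⟨t, rfl⟩
  | tail _ hstep ih =>
    obtain ⟨t', rfl⟩ := ih
    exact lmo_lam hstep

theorem hap1_lmo {M N : Lam} (h : Hap1 M N) : Lmo M N := by
  induction h with
  | head t u => exact Lmo.head t u
  | appL t hs ih =>
    exact Lmo.appL t (fun t' he => by subst he; cases hs) ih

theorem hap_lmoStar {M N : Lam} (h : Hap M N) : Relation.ReflTransGen Lmo M N :=
  Relation.ReflTransGen.lift id (fun _ _ hab => hap1_lmo hab) _ _ h

theorem nf_lam {t : Lam} (h : BetaNF (lam t)) : BetaNF t :=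
  fun u hu => h (lam u) (Beta.abs hu)

theorem nf_app {s t : Lam} (h : BetaNF (app s t)) :
    (∀ t', s ≠ lam t') ∧ BetaNF s ∧ BetaNF t :=
  ⟨fun t' he => h _ (by rw [he]; exact Beta.beta t' t),
   fun u hu => h _ (Beta.appL t hu),
   fun u hu => h _ (Beta.appR s hu)⟩

theorem lmoStar_appL {A A' B : Lam} (h : Relation.ReflTransGen Lmo A A')
    (hA' : ∀ t, A' ≠ lam t) :
    Relation.ReflTransGen Lmo (app A B) (app A' B) := by
  induction h using Relation.ReflTransGen.head_induction_on with
  | refl => exact .refl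
  | head hstep hrest ih =>
    refine Relation.ReflTransGen.head (Lmo.appL B ?_ hstep) ih
    intro t' he
    subst he
    obtain ⟨t2, rfl⟩ := lmoStar_lam ((Relation.ReflTransGen.single hstep).trans hrest)
    exact hA' _ rfl

theorem lmoStar_appR (s : Lam) {B B' : Lam} (hs1 : ∀ t', s ≠ lam t')
    (hs2 : BetaNF s) (h : Relation.ReflTransGen Lmo B B') :
    Relation.ReflTransGen Lmo (app s B) (app s B') :=
  Relation.ReflTransGen.lift (fun x => app s x)
    (fun _ _ hab => Lmo.appR s hs1 hs2 hab) _ _ h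

theorem lmoStar_abs {B B' : Lam} (h : Relation.ReflTransGen Lmo B B') :
    Relation.ReflTransGen Lmo (lam B) (lam B') :=
  Relation.ReflTransGen.lift Lam.lam (fun _ _ hab => Lmo.abs hab) _ _ h

theorem st_lmo {M N : Lam} (h : St M N) (hN : BetaNF N) :
    Relation.ReflTransGen Lmo M N := by
  induction h with
  | var h => exact hap_lmoStar h
  | lam h _ ih => exact (hap_lmoStar h).trans (lmoStar_abs (ih (nf_lam hN)))
  | app h _ _ ihA ihB =>
    obtain ⟨h1, h2, h3⟩ := nf_app hN
    exact (hap_lmoStar h).trans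
      ((lmoStar_appL (ihA h2) h1).trans (lmoStar_appR _ h1 h2 (ihB h3)))

end LmoProof

/-- The leftmost-outermost strategy is normalizing: if `M` β-reduces to a
β-normal form `N`, then the leftmost-outermost reduction sequence starting
from `M` terminates in `N`. -/
theorem leftmost_outermost_normalizing (M N : Lam)
    (h : BetaStar M N) (hN : BetaNF N) :
    Relation.ReflTransGen Lmo M N := by
  exact LmoProof.st_lmo (LmoProof.betastar_st h) hN
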